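/- Fix x, y ∈ ℝ, H > 0, K ≥ 0, and constants A > 0 (with A = P·(c/(4πf))²/(B N₀)). Define d(q) = √((q₁−x)² + (q₂−y)² + H²) for q ∈ ℝ², g(q) = 1 + A·e^{−K d(q)}/d(q)², and t(q) = 1/ln(g(q)). If for all q in a convex open set Ω ⊂ ℝ² the condition d(q) > (1/K)·(√(2 g(q) ln g(q) / (2 g(q) − 2 − ln g(q))) − 2) holds (with the convention that the condition reads √(2g ln g/(2g−2−ln g)) < 2 + K d), then t is convex on Ω. -/

import Mathlib

noncomputable def phiF (A K r : ℝ) : ℝ := 1 / Real.log (1 + A * Real.exp (-K * r) / r ^ 2)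

noncomputable def phiF1 (A K r : ℝ) : ℝ :=
  A * Real.exp (-K * r) / r ^ 2 * (K * r + 2) /
    (r * (1 + A * Real.exp (-K * r) / r ^ 2) *
      Real.log (1 + A * Real.exp (-K * r) / r ^ 2) ^ 2)

noncomputable def phiF2 (A K r : ℝ) : ℝ :=
  A * Real.exp (-K * r) / r ^ 2 *
      ((2 + Real.log (1 + A * Real.exp (-K * r) / r ^ 2)) * (A * Real.exp (-K * r) / r ^ 2) *
          (K * r + 2) ^ 2 -
        Real.log (1 + A * Real.exp (-K * r) / r ^ 2) * (1 + A * Real.exp (-K * r) / r ^ 2) *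
          ((K * r + 2) ^ 2 + 2)) /
    (r ^ 2 * (1 + A * Real.exp (-K * r) / r ^ 2) ^ 2 *
      Real.log (1 + A * Real.exp (-K * r) / r ^ 2) ^ 3)

lemma basicFacts (A K r : ℝ) (hA : 0 < A) (hr : 0 < r) :
    0 < A * Real.exp (-K * r) / r ^ 2 ∧
      0 < Real.log (1 + A * Real.exp (-K * r) / r ^ 2) := by
  have hw : 0 < A * Real.exp (-K * r) / r ^ 2 := by positivity
  exact ⟨hw, Real.log_pos (by linarith)⟩

lemma hasDerivAt_phiF (A K r : ℝ) (hA : 0 < A) (hr : 0 < r) :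
    HasDerivAt (fun s => phiF A K s) (phiF1 A K r) r := by
  obtain ⟨hw, hL⟩ := basicFacts A K r hA hr
  have hG : (0:ℝ) < 1 + A * Real.exp (-K * r) / r ^ 2 := by linarith
  have h1 : HasDerivAt (fun s : ℝ => -K * s) (-K) r := by
    simpa using (hasDerivAt_id r).const_mul (-K)
  have h2 := h1.exp
  have h3 := h2.const_mul A
  have h4 : HasDerivAt (fun s : ℝ => s ^ 2) (2 * r ^ 1) r := by
    simpa using hasDerivAt_pow 2 r
  have h5 := h3.div h4 (by positivity)
  have h6 := h5.const_add 1
  have h7 := h6.log hG.ne'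
  have h8 := h7.inv hL.ne'
  have h9 : HasDerivAt (fun s => phiF A K s) (-((A * (Real.exp (-K * r) * -K) * r ^ 2 -
      A * Real.exp (-K * r) * (2 * r ^ 1)) / (r ^ 2) ^ 2 /
        (1 + A * Real.exp (-K * r) / r ^ 2)) /
      Real.log (1 + A * Real.exp (-K * r) / r ^ 2) ^ 2) r := by
    simpa [phiF, one_div, Pi.inv_def] using h8
  convert h9 using 1
  have hrne : r ≠ 0 := hr.ne'
  rw [phiF1]
  set e := Real.exp (-K * r) with he
  set lg := Real.log (1 + A * e / r ^ 2) with hlg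
  have hLne : lg ≠ 0 := hL.ne'
  have hGne : (1 + A * e / r ^ 2) ≠ 0 := hG.ne'
  field_simp
  ring

set_option maxHeartbeats 2000000 in
lemma hasDerivAt_phiF1 (A K r : ℝ) (hA : 0 < A) (hr : 0 < r) :
    HasDerivAt (fun s => phiF1 A K s) (phiF2 A K r) r := by
  obtain ⟨hw, hL⟩ := basicFacts A K r hA hr
  have hG : (0:ℝ) < 1 + A * Real.exp (-K * r) / r ^ 2 := by linarith
  have h1 : HasDerivAt (fun s : ℝ => -K * s) (-K) r := by
    simpa using (hasDerivAt_id r).const_mul (-K)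
  have h2 := h1.exp
  have h3 := h2.const_mul A
  have h4 : HasDerivAt (fun s : ℝ => s ^ 2) (2 * r ^ 1) r := by
    simpa using hasDerivAt_pow 2 r
  have h5 := h3.div h4 (by positivity)
  have h6 := h5.const_add 1
  have h7 := h6.log hG.ne'
  have hM : HasDerivAt (fun s : ℝ => K * s + 2) K r := by
    simpa using ((hasDerivAt_id r).const_mul K).add_const 2
  have hN := h5.mul hM
  have hid : HasDerivAt (fun s : ℝ => s) 1 r := hasDerivAt_id r
  have hD := (hid.mul h6).mul (h7.pow 2)
  have hDne : r * (1 + A * Real.exp (-K * r) / r ^ 2) *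
      Real.log (1 + A * Real.exp (-K * r) / r ^ 2) ^ 2 ≠ 0 := by positivity
  have h9 := hN.div hD hDne
  have hgoal : (fun s => phiF1 A K s) = (fun y => A * Real.exp (-K * y) / y ^ 2 * (K * y + 2) /
      (y * (1 + A * Real.exp (-K * y) / y ^ 2) * Real.log (1 + A * Real.exp (-K * y) / y ^ 2) ^ 2)) := by
    funext s; rw [phiF1]
  rw [hgoal]
  convert h9 using 1
  · rfl
  · rfl
  · funext s; simp only [Pi.div_apply, Pi.mul_apply, Pi.pow_apply]
  have hrne : r ≠ 0 := hr.ne'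
  rw [phiF2]
  simp only [Pi.div_apply, Pi.mul_apply, Pi.pow_apply]
  set e := Real.exp (-K * r) with he
  set lg := Real.log (1 + A * e / r ^ 2) with hlg
  have hLne : lg ≠ 0 := hL.ne'
  have hGne : (1 + A * e / r ^ 2) ≠ 0 := hG.ne'
  have he0 : 0 < e := Real.exp_pos _
  have hEA : e * A + r ^ 2 ≠ 0 := (add_pos (mul_pos he0 hA) (pow_pos hr 2)).ne'
  field_simp
  ring

lemma phiF1_nonneg (A K r : ℝ) (hA : 0 < A) (hK : 0 ≤ K) (hr : 0 < r) :
    0 ≤ phiF1 A K r := by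
  obtain ⟨hw, hL⟩ := basicFacts A K r hA hr
  have hG : (0:ℝ) < 1 + A * Real.exp (-K * r) / r ^ 2 := by linarith
  rw [phiF1]
  have hM : (0:ℝ) < K * r + 2 := by positivity
  positivity

lemma phiF2_nonneg (A K r : ℝ) (hA : 0 < A) (hK : 0 ≤ K) (hr : 0 < r)
    (hcond : Real.sqrt (2 * (1 + A * Real.exp (-K * r) / r ^ 2) *
        Real.log (1 + A * Real.exp (-K * r) / r ^ 2) /
        (2 * (1 + A * Real.exp (-K * r) / r ^ 2) - 2 -
          Real.log (1 + A * Real.exp (-K * r) / r ^ 2))) < 2 + K * r) :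
    0 ≤ phiF2 A K r := by
  obtain ⟨hw, hL⟩ := basicFacts A K r hA hr
  rw [phiF2]
  set e := Real.exp (-K * r) with he
  set w := A * e / r ^ 2 with hwdef
  set lg := Real.log (1 + w) with hlg
  have hG : (0:ℝ) < 1 + w := by linarith
  -- log x < x - 1
  have hlt : lg < (1 + w) - 1 := by
    rw [hlg]
    exact Real.log_lt_sub_one_of_pos hG (ne_of_gt (by linarith : (1:ℝ) < 1 + w))
  have hden : 0 < 2 * (1 + w) - 2 - lg := by linarith
  have hM : (0:ℝ) < 2 + K * r := by positivity
  have hsq : 2 * (1 + w) * lg / (2 * (1 + w) - 2 - lg) < (2 + K * r) ^ 2 := by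
    rw [← Real.sqrt_lt' hM] at *
    exact hcond
  have hkey : 2 * (1 + w) * lg < (2 + K * r) ^ 2 * (2 * (1 + w) - 2 - lg) := by
    rw [div_lt_iff₀ hden] at hsq
    linarith
  have hnum : 0 ≤ (2 + lg) * w * (K * r + 2) ^ 2 - lg * (1 + w) * ((K * r + 2) ^ 2 + 2) := by
    nlinarith [hkey]
  have hdenpos : (0:ℝ) < r ^ 2 * (1 + w) ^ 2 * lg ^ 3 := by positivity
  exact div_nonneg (mul_nonneg hw.le hnum) hdenpos.le

lemma sqrt_dist_convex_aux (u1 v1 u2 v2 h a b : ℝ) (ha : 0 ≤ a) (hb : 0 ≤ b)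
    (hab : a + b = 1) :
    Real.sqrt ((a * u1 + b * u2) ^ 2 + (a * v1 + b * v2) ^ 2 + h ^ 2) ≤
      a * Real.sqrt (u1 ^ 2 + v1 ^ 2 + h ^ 2) + b * Real.sqrt (u2 ^ 2 + v2 ^ 2 + h ^ 2) := by
  set s1 := Real.sqrt (u1 ^ 2 + v1 ^ 2 + h ^ 2) with hs1
  set s2 := Real.sqrt (u2 ^ 2 + v2 ^ 2 + h ^ 2) with hs2
  have hs1n : 0 ≤ s1 := Real.sqrt_nonneg _
  have hs2n : 0 ≤ s2 := Real.sqrt_nonneg _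
  have hs1sq : s1 ^ 2 = u1 ^ 2 + v1 ^ 2 + h ^ 2 := Real.sq_sqrt (by positivity)
  have hs2sq : s2 ^ 2 = u2 ^ 2 + v2 ^ 2 + h ^ 2 := Real.sq_sqrt (by positivity)
  have hdot : u1 * u2 + v1 * v2 + h * h ≤ s1 * s2 := by
    rcases le_or_gt (u1 * u2 + v1 * v2 + h * h) 0 with hd | hd
    · exact hd.trans (by positivity)
    · nlinarith [sq_nonneg (u1 * v2 - v1 * u2), sq_nonneg (u1 * h - u2 * h),
        sq_nonneg (v1 * h - v2 * h), sq_nonneg (s1 * s2 - (u1 * u2 + v1 * v2 + h * h)),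
        mul_nonneg hs1n hs2n]
  have hE : (a * u1 + b * u2) ^ 2 + (a * v1 + b * v2) ^ 2 + h ^ 2 ≤ (a * s1 + b * s2) ^ 2 := by
    have h2ab : 0 ≤ a * b := mul_nonneg ha hb
    have hone : (a + b) ^ 2 = 1 := by rw [hab]; norm_num
    have hexp : (a * s1 + b * s2) ^ 2 = a ^ 2 * (u1 ^ 2 + v1 ^ 2 + h ^ 2) +
        b ^ 2 * (u2 ^ 2 + v2 ^ 2 + h ^ 2) + 2 * (a * b) * (s1 * s2) := by
      linear_combination a ^ 2 * hs1sq + b ^ 2 * hs2sq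
    rw [hexp]
    have key := mul_nonneg h2ab (sub_nonneg.2 hdot)
    nlinarith [key, hone, sq_nonneg h, mul_nonneg h2ab (sq_nonneg h)]
  calc Real.sqrt ((a * u1 + b * u2) ^ 2 + (a * v1 + b * v2) ^ 2 + h ^ 2)
      ≤ Real.sqrt ((a * s1 + b * s2) ^ 2) := Real.sqrt_le_sqrt hE
    _ = a * s1 + b * s2 := Real.sqrt_sq (by positivity)


/-- Lemma 1: the inverse spectral efficiency t(q) = 1/ln(g(q)) of a THz link, where
g(q) = 1 + A e^{−K d(q)}/d(q)² and d(q) is the 3D distance from the UAV at horizontal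
position q and altitude H to the ground node at (x, y, 0), is convex on any convex
open set Ω on which √(2 g ln g/(2g − 2 − ln g)) < 2 + K d holds. -/
theorem uav_positioning_convex (x y H K A : ℝ) (hH : 0 < H) (hK : 0 ≤ K) (hA : 0 < A)
    (Ω : Set (ℝ × ℝ)) (hΩconv : Convex ℝ Ω) (hΩopen : IsOpen Ω)
    (d g t : (ℝ × ℝ) → ℝ)
    (hd : d = fun q => Real.sqrt ((q.1 - x) ^ 2 + (q.2 - y) ^ 2 + H ^ 2))
    (hg : g = fun q => 1 + A * Real.exp (-K * d q) / (d q) ^ 2)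
    (ht : t = fun q => 1 / Real.log (g q))
    (hcond : ∀ q ∈ Ω,
      Real.sqrt (2 * g q * Real.log (g q) / (2 * g q - 2 - Real.log (g q)))
        < 2 + K * d q) :
    ConvexOn ℝ Ω t := by
  have hteq : t = (fun r => phiF A K r) ∘ d := by
    funext q
    simp only [ht, hg, Function.comp_apply, phiF]
  rw [hteq]
  -- convexity of d on Ω
  have hdconv : ConvexOn ℝ Ω d := by
    refine ⟨hΩconv, ?_⟩
    intro p hp q hq a b ha hb hab
    simp only [hd, smul_eq_mul]
    have h1 : (a • p + b • q).1 = a * p.1 + b * q.1 := rfl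
    have h2 : (a • p + b • q).2 = a * p.2 + b * q.2 := rfl
    rw [h1, h2]
    have e1 : a * p.1 + b * q.1 - x = a * (p.1 - x) + b * (q.1 - x) := by
      linear_combination x * hab
    have e2 : a * p.2 + b * q.2 - y = a * (p.2 - y) + b * (q.2 - y) := by
      linear_combination y * hab
    rw [e1, e2]
    exact sqrt_dist_convex_aux (p.1 - x) (p.2 - y) (q.1 - x) (q.2 - y) H a b ha hb hab
  have hdcont : Continuous d := by
    rw [hd]
    exact Real.continuous_sqrt.comp (by continuity)
  set S : Set ℝ := d '' Ω with hS
  have hSconv : Convex ℝ S :=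
    convex_iff_ordConnected.mpr
      ((hΩconv.isPreconnected.image d hdcont.continuousOn).ordConnected)
  have hSfacts : ∀ r ∈ S, H ≤ r ∧
      Real.sqrt (2 * (1 + A * Real.exp (-K * r) / r ^ 2) *
          Real.log (1 + A * Real.exp (-K * r) / r ^ 2) /
          (2 * (1 + A * Real.exp (-K * r) / r ^ 2) - 2 -
            Real.log (1 + A * Real.exp (-K * r) / r ^ 2))) < 2 + K * r := by
    rintro r ⟨q, hq, rfl⟩
    constructor
    · rw [hd]
      calc H = Real.sqrt (H ^ 2) := (Real.sqrt_sq hH.le).symm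
        _ ≤ _ := Real.sqrt_le_sqrt (by nlinarith [sq_nonneg (q.1 - x), sq_nonneg (q.2 - y)])
    · have := hcond q hq
      simp only [hg] at this
      exact this
  have hSpos : ∀ r ∈ S, 0 < r := fun r hr => lt_of_lt_of_le hH (hSfacts r hr).1
  have hSipos : ∀ r ∈ interior S, 0 < r := fun r hr => hSpos r (interior_subset hr)
  have hφcont : ContinuousOn (fun r => phiF A K r) S := fun r hr =>
    ((hasDerivAt_phiF A K r hA (hSpos r hr)).continuousAt).continuousWithinAt
  have hφconv : ConvexOn ℝ S (fun r => phiF A K r) := by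
    refine convexOn_of_hasDerivWithinAt2_nonneg hSconv hφcont
      (f' := fun r => phiF1 A K r) (f'' := fun r => phiF2 A K r)
      (fun r hr => (hasDerivAt_phiF A K r hA (hSipos r hr)).hasDerivWithinAt)
      (fun r hr => (hasDerivAt_phiF1 A K r hA (hSipos r hr)).hasDerivWithinAt)
      (fun r hr => ?_)
    exact phiF2_nonneg A K r hA hK (hSipos r hr) (hSfacts r (interior_subset hr)).2
  have hφmono : MonotoneOn (fun r => phiF A K r) S := by
    refine monotoneOn_of_deriv_nonneg hSconv hφcont
      (fun r hr => (hasDerivAt_phiF A K r hA (hSipos r hr)).differentiableAt.differentiableWithinAt)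
      (fun r hr => ?_)
    rw [(hasDerivAt_phiF A K r hA (hSipos r hr)).deriv]
    exact phiF1_nonneg A K r hA hK (hSipos r hr)
  exact hφconv.comp hdconv hφmono
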